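/- If x_i = S (the suffix S[i..] falls lexicographically below the insert-point suffix), then R[SA_R[ip(i)−1]..] < S[i..] < R[SA_R[ip(i)]..]; and if x_i = L, then R[SA_R[ip(i)]..] < S[i..] < R[SA_R[ip(i)+1]..]. -/

import Mathlib

open List

private lemma lex_append_left_iff' {α : Type*} [LinearOrder α] (U X Y : List α) :
    List.Lex (· < ·) (U ++ X) (U ++ Y) ↔ List.Lex (· < ·) X Y := by
  induction U with
  | nil => rfl
  | cons a U ih => simpa [List.lex_cons_iff] using ih

/-- If `U` is not a prefix of `W`, then `W < U ++ X` does not depend on `X`. -/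
private lemma lex_np {α : Type*} [LinearOrder α] :
    ∀ (U W X Y : List α), ¬ U <+: W →
      List.Lex (· < ·) W (U ++ X) → List.Lex (· < ·) W (U ++ Y)
  | [], W, _, _, h, _ => absurd (List.nil_prefix) h
  | _ :: _, [], _, _, _, _ => List.Lex.nil
  | u :: U, w :: W, X, Y, hp, hl => by
    cases hl with
    | rel h => exact List.Lex.rel h
    | cons h =>
        exact List.Lex.cons
          (lex_np U W X Y (fun hpre => hp (List.cons_prefix_cons.2 ⟨rfl, hpre⟩)) h)

/-- If `U` is not a prefix of `W`, then `U ++ X < W` does not depend on `X`. -/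
private lemma lex_np' {α : Type*} [LinearOrder α] (U W X Y : List α) (hp : ¬ U <+: W)
    (h : List.Lex (· < ·) (U ++ X) W) : List.Lex (· < ·) (U ++ Y) W := by
  rcases lt_trichotomy (U ++ Y) W with h' | h' | h'
  · exact h'
  · exact absurd ⟨Y, h'⟩ hp
  · exact absurd h (asymm (lex_np U W Y X hp h'))

def MFactor {α : Type*} [LinearOrder α] (R : List α) (SA : ℕ → ℕ)
    (suf U : List α) (c : α) (ip : ℕ) : Prop :=
  (∃ V, suf = U ++ c :: V) ∧ U <:+: R ∧ ¬ ((U ++ [c]) <:+: R) ∧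
  (IsGreatest {j | j < R.length ∧ U <+: R.drop (SA j) ∧
      List.Lex (· < ·) (R.drop (SA j)) (U ++ [c])} ip ∨
   ((∀ j, j < R.length → U <+: R.drop (SA j) →
      ¬ List.Lex (· < ·) (R.drop (SA j)) (U ++ [c])) ∧
    IsLeast {j | j < R.length ∧ U <+: R.drop (SA j)} ip))

/-- Observation on insert points: if `Uc` falls below the insert-point suffix
(case `x = S`), then `R[SA[ip−1]..] < S[i..] < R[SA[ip]..]`; if it falls above
(case `x = L`), then `R[SA[ip]..] < S[i..] < R[SA[ip+1]..]`. -/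
theorem stmt9 {α : Type*} [LinearOrder α] (R S : List α) (SA : ℕ → ℕ)
    (hbij : Set.BijOn SA (Set.Iio R.length) (Set.Iio R.length))
    (hsort : ∀ r r', r < r' → r' < R.length →
      List.Lex (· < ·) (R.drop (SA r)) (R.drop (SA r')))
    (t : α) (hterm : R.getLast? = some t) (htS : ∀ a ∈ S, t < a)
    (hSR : ∀ a ∈ S, a ∈ R)
    (i : ℕ) (U : List α) (c : α) (ip : ℕ)
    (hU : U ≠ []) (hmf : MFactor R SA (S.drop i) U c ip) :
    (List.Lex (· < ·) (U ++ [c]) (R.drop (SA ip)) → 1 ≤ ip →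
      List.Lex (· < ·) (R.drop (SA (ip - 1))) (S.drop i) ∧
      List.Lex (· < ·) (S.drop i) (R.drop (SA ip))) ∧
    (List.Lex (· < ·) (R.drop (SA ip)) (U ++ [c]) → ip + 1 < R.length →
      List.Lex (· < ·) (R.drop (SA ip)) (S.drop i) ∧
      List.Lex (· < ·) (S.drop i) (R.drop (SA (ip + 1)))) := by
  obtain ⟨⟨V, hV⟩, hinf, hninf, hip⟩ := hmf
  -- `U ++ [c]` is not a prefix of any suffix of `R`
  have hnp : ∀ n : ℕ, ¬ (U ++ [c]) <+: R.drop n := by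
    intro n hpre
    exact hninf (hpre.isInfix.trans (R.drop_suffix n).isInfix)
  -- (a) a suffix of `R` starting with `U` which is `< Uc` is `< S.drop i`
  have subA : ∀ n : ℕ, U <+: R.drop n →
      List.Lex (· < ·) (R.drop n) (U ++ [c]) →
      List.Lex (· < ·) (R.drop n) (U ++ c :: V) := by
    intro n hpre hlex
    obtain ⟨W, hW⟩ := hpre
    rw [← hW] at hlex ⊢
    rw [lex_append_left_iff'] at hlex ⊢
    cases hlex with
    | nil => exact List.Lex.nil
    | rel h => exact List.Lex.rel h
    | cons h => exact absurd h (fun h' => by cases h')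
  -- (b) a suffix of `R` starting with `U` which is not `< Uc` is `> S.drop i`
  have subB : ∀ n : ℕ, U <+: R.drop n →
      ¬ List.Lex (· < ·) (R.drop n) (U ++ [c]) →
      List.Lex (· < ·) (U ++ c :: V) (R.drop n) := by
    intro n hpre hnlt
    obtain ⟨W, hW⟩ := hpre
    have hlex : List.Lex (· < ·) (U ++ [c]) (R.drop n) := by
      rcases lt_trichotomy (U ++ [c]) (R.drop n) with h | h | h
      · exact h
      · exact absurd (show (U ++ [c]) <+: R.drop n by rw [← h]) (hnp n)
      · exact absurd h hnlt
    rw [← hW] at hlex ⊢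
    rw [lex_append_left_iff'] at hlex ⊢
    cases hlex with
    | rel h => exact List.Lex.rel h
    | cons h =>
        rename_i W2
        exact absurd (show (U ++ [c]) <+: R.drop n by
          rw [← hW]; exact ⟨W2, by simp⟩) (hnp n)
  constructor
  · -- case `x = S`
    intro h1 hip1
    rcases hip with hg | ⟨hA, ⟨⟨hiplt, hpre⟩, hlb⟩⟩
    · exact absurd h1 (asymm hg.1.2.2)
    · have hmem : List.Lex (· < ·) (S.drop i) (R.drop (SA ip)) :=
        hV ▸ subB (SA ip) hpre (hA ip hiplt hpre)
      refine ⟨?_, hmem⟩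
      have hnot : ¬ U <+: R.drop (SA (ip - 1)) := by
        intro hp
        have := hlb ⟨by omega, hp⟩
        omega
      have hsorted := hsort (ip - 1) ip (by omega) hiplt
      have hlow : List.Lex (· < ·) (R.drop (SA (ip - 1))) (U ++ [c]) := by
        rcases lt_trichotomy (R.drop (SA (ip - 1))) (U ++ [c])
          with h | h | h
        · exact h
        · exact absurd (show U <+: R.drop (SA (ip - 1)) by rw [h]; exact ⟨[c], rfl⟩) hnot
        · obtain ⟨W, hW⟩ := hpre
          have := lex_np' U (R.drop (SA (ip - 1))) [c] W hnot h
          rw [hW] at this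
          exact absurd this (asymm hsorted)
      exact hV ▸ lex_np U (R.drop (SA (ip - 1))) [c] (c :: V) hnot hlow
  · -- case `x = L`
    intro h2 hlen
    rcases hip with ⟨⟨hiplt, hpre, hlex⟩, hub⟩ | ⟨hA, ⟨⟨hiplt, hpre⟩, _⟩⟩
    · refine ⟨hV ▸ subA (SA ip) hpre hlex, ?_⟩
      by_cases hp : U <+: R.drop (SA (ip + 1))
      · have : ¬ List.Lex (· < ·) (R.drop (SA (ip + 1))) (U ++ [c]) := by
          intro h
          have := hub ⟨hlen, hp, h⟩
          omega
        exact hV ▸ subB (SA (ip + 1)) hp this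
      · have hs := hsort ip (ip + 1) (by omega) hlen
        have hhigh : List.Lex (· < ·) (U ++ [c]) (R.drop (SA (ip + 1))) := by
          rcases lt_trichotomy (U ++ [c]) (R.drop (SA (ip + 1)))
            with h | h | h
          · exact h
          · exact absurd ⟨[c], h⟩ hp
          · obtain ⟨W, hW⟩ := hpre
            have := lex_np U (R.drop (SA (ip + 1))) [c] W hp h
            rw [hW] at this
            exact absurd this (asymm hs)
        exact hV ▸ lex_np' U (R.drop (SA (ip + 1))) [c] (c :: V) hp hhigh
    · exact absurd h2 (hA ip hiplt hpre)
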